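/- Let θ be a real 2×2 matrix, η ∈ ℝ², and φ : [0,T] → ℝ continuous. Define z(t) = ∫₀^t cos φ(s) ds and w(t) = ∫₀^t sin φ(s) · exp(z(s)θ)η ds. Set φ₃(t) := -φ(T-t) + π, z₃(t) := ∫₀^t cos φ₃(s) ds, and w₃(t) := ∫₀^t sin φ₃(s) · exp(z₃(s)θ)η ds. Then z₃(t) = z(T-t) - z(T) and w₃(t) = exp(-z(T)θ)(w(T) - w(T-t)) for all t ∈ [0,T]. -/

import Mathlib

open Real

/-- The horizontal `ℝ`-component: `z(t) = ∫₀^t cos φ(s) ds`. -/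
noncomputable def zComp (φ : ℝ → ℝ) (t : ℝ) : ℝ :=
  ∫ s in (0 : ℝ)..t, cos (φ s)

/-- The horizontal `ℝ²`-component: `w(t) = ∫₀^t sin φ(s) · exp(z(s)θ)η ds`. -/
noncomputable def wComp (θ : Matrix (Fin 2) (Fin 2) ℝ) (η : Fin 2 → ℝ)
    (φ : ℝ → ℝ) (t : ℝ) : Fin 2 → ℝ :=
  ∫ s in (0 : ℝ)..t, sin (φ s) • (NormedSpace.exp (zComp φ s • θ)).mulVec η

lemma zComp_continuous (φ : ℝ → ℝ) (hφ : Continuous φ) : Continuous (zComp φ) :=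
  intervalIntegral.continuous_primitive
    (fun a b => (Real.continuous_cos.comp hφ : Continuous fun x => Real.cos (φ x)).intervalIntegrable a b) 0

lemma exp_smul_continuous (θ : Matrix (Fin 2) (Fin 2) ℝ) :
    Continuous fun r : ℝ => NormedSpace.exp (r • θ) := by
  letI : NormedRing (Matrix (Fin 2) (Fin 2) ℝ) := Matrix.linftyOpNormedRing
  letI : NormedAlgebra ℝ (Matrix (Fin 2) (Fin 2) ℝ) := Matrix.linftyOpNormedAlgebra
  letI : NormedAlgebra ℚ (Matrix (Fin 2) (Fin 2) ℝ) := Matrix.linftyOpNormedAlgebra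
  exact NormedSpace.exp_continuous.comp (continuous_id.smul continuous_const)

lemma exp_sub_smul (θ : Matrix (Fin 2) (Fin 2) ℝ) (a b : ℝ) :
    NormedSpace.exp ((a - b) • θ)
      = NormedSpace.exp ((-b) • θ) * NormedSpace.exp (a • θ) := by
  rw [show (a - b) • θ = (-b) • θ + a • θ by module]
  exact Matrix.exp_add_of_commute _ _ (((Commute.refl θ).smul_left (-b)).smul_right a)

lemma zComp_eps3 (T : ℝ) (φ : ℝ → ℝ) (hφ : Continuous φ) (t : ℝ) :
    zComp (fun s => -φ (T - s) + π) t = zComp φ (T - t) - zComp φ T := by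
  have hcos : Continuous fun x => Real.cos (φ x) := Real.continuous_cos.comp hφ
  unfold zComp
  simp_rw [neg_add_eq_sub, Real.cos_pi_sub]
  rw [intervalIntegral.integral_neg,
    intervalIntegral.integral_comp_sub_left (fun u => Real.cos (φ u)) T, sub_zero,
    ← intervalIntegral.integral_interval_sub_left
      (hcos.intervalIntegrable 0 T) (hcos.intervalIntegrable 0 (T - t)),
    neg_sub]

theorem symmetry_eps3_horizontal (θ : Matrix (Fin 2) (Fin 2) ℝ) (η : Fin 2 → ℝ)
    (T : ℝ) (hT : 0 ≤ T) (φ : ℝ → ℝ) (hφ : Continuous φ) :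
    ∀ t ∈ Set.Icc 0 T,
      zComp (fun s => -φ (T - s) + π) t = zComp φ (T - t) - zComp φ T ∧
      wComp θ η (fun s => -φ (T - s) + π) t
        = (NormedSpace.exp ((-(zComp φ T)) • θ)).mulVec
            (wComp θ η φ T - wComp θ η φ (T - t)) := by
  intro t _
  refine ⟨zComp_eps3 T φ hφ t, ?_⟩
  -- continuity of the original integrand
  have hg : Continuous fun u : ℝ =>
      sin (φ u) • (NormedSpace.exp (zComp φ u • θ)).mulVec η :=
    (Real.continuous_sin.comp hφ : Continuous fun x => Real.sin (φ x)).smul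
      (Continuous.matrix_mulVec ((exp_smul_continuous θ).comp (zComp_continuous φ hφ))
        continuous_const)
  -- the continuous linear map given by multiplication with exp(-z(T)θ)
  set A : Matrix (Fin 2) (Fin 2) ℝ := NormedSpace.exp ((-(zComp φ T)) • θ) with hA
  let L : (Fin 2 → ℝ) →L[ℝ] (Fin 2 → ℝ) := LinearMap.toContinuousLinearMap A.mulVecLin
  have hL : ∀ v, L v = A.mulVec v := fun v => rfl
  unfold wComp
  simp_rw [zComp_eps3 T φ hφ]
  simp_rw [neg_add_eq_sub]
  simp_rw [Real.sin_pi_sub]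
  simp_rw [exp_sub_smul]
  simp_rw [← hA]
  simp_rw [← Matrix.mulVec_mulVec]
  simp_rw [← Matrix.mulVec_smul]
  simp_rw [← hL]
  have hg2 : Continuous fun u : ℝ =>
      (NormedSpace.exp (zComp φ u • θ)).mulVec (sin (φ u) • η) :=
    Continuous.matrix_mulVec ((exp_smul_continuous θ).comp (zComp_continuous φ hφ))
      ((Real.continuous_sin.comp hφ).smul continuous_const)
  have hg3 : Continuous fun s : ℝ =>
      (NormedSpace.exp (zComp φ (T - s) • θ)).mulVec (sin (φ (T - s)) • η) :=
    hg2.comp (continuous_const.sub continuous_id)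
  rw [ContinuousLinearMap.intervalIntegral_comp_comm L (hg3.intervalIntegrable 0 t),
    intervalIntegral.integral_comp_sub_left
      (fun u => (NormedSpace.exp (zComp φ u • θ)).mulVec (sin (φ u) • η)) T,
    sub_zero,
    ← intervalIntegral.integral_interval_sub_left
      (hg2.intervalIntegrable 0 T) (hg2.intervalIntegrable 0 (T - t))]
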